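/- Let X be a nonempty finite set, K a row-stochastic matrix on X, γ ∈ [0,1), ρ a full-support probability weight on X, and q : X → ℝ with |q(x)| ≤ B for all x. Let d = (1−γ)·∑_{t≥0} γ^t (Kᵀ)^t ρ be the discounted occupancy, and assume d(x) ≤ κ·ρ(x) for all x. Then the dual function l(x) = ((I − γ·Kᵀ)⁻¹ (ρ ⊙ q))(x) / ρ(x) satisfies |l(x)| ≤ κ·B / (1−γ) for all x. -/
import Mathlib


open Matrix BigOperators

set_option maxHeartbeats 1000000 in
/-- Dual boundedness (Proposition 'Dual representations and boundedness'): under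
the occupancy coverage `d ≤ κ ρ` and `|q| ≤ B`, the dual
`l = ((I - γ Kᵀ)⁻¹ (ρ ⊙ q)) / ρ` satisfies `|l(x)| ≤ κ B / (1-γ)`. -/
theorem stmt_6 {X : Type*} [Fintype X] [Nonempty X] [DecidableEq X]
    (K : Matrix X X ℝ) (hK0 : ∀ x y, 0 ≤ K x y) (hK1 : ∀ x, ∑ y, K x y = 1)
    (γ : ℝ) (hγ0 : 0 ≤ γ) (hγ1 : γ < 1)
    (ρ : X → ℝ) (hρpos : ∀ x, 0 < ρ x) (hρ1 : ∑ x, ρ x = 1)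
    (q : X → ℝ) (B : ℝ) (hq : ∀ x, |q x| ≤ B)
    (κ : ℝ) (d : X → ℝ)
    (hd : ∀ x, d x = (1 - γ) * ∑' t : ℕ, γ ^ t * ((Kᵀ ^ t) *ᵥ ρ) x)
    (hcov : ∀ x, d x ≤ κ * ρ x) :
    ∀ x, |(((1 : Matrix X X ℝ) - γ • Kᵀ)⁻¹ *ᵥ fun y => ρ y * q y) x / ρ x| ≤
      κ * B / (1 - γ) := by
  have hB : 0 ≤ B := le_trans (abs_nonneg _) (hq (Classical.arbitrary X))
  have h1γ : (0:ℝ) < 1 - γ := by linarith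
  set w : X → ℝ := fun y => ρ y * q y with hw
  set A : Matrix X X ℝ := (1 : Matrix X X ℝ) - γ • Kᵀ with hA
  -- powers of K are stochastic
  have hpow0 : ∀ t : ℕ, ∀ x y, 0 ≤ (K ^ t) x y := by
    intro t
    induction t with
    | zero => intro x y; simp [Matrix.one_apply]; positivity
    | succ t ih =>
      intro x y
      rw [pow_succ, Matrix.mul_apply]
      exact Finset.sum_nonneg fun z _ => mul_nonneg (ih x z) (hK0 z y)
  have hpow1 : ∀ t : ℕ, ∀ x, ∑ y, (K ^ t) x y = 1 := by
    intro t
    induction t with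
    | zero => intro x; simp [Matrix.one_apply]
    | succ t ih =>
      intro x
      simp only [pow_succ, Matrix.mul_apply]
      rw [Finset.sum_comm]
      calc ∑ z, ∑ y, (K ^ t) x z * K z y
          = ∑ z, (K ^ t) x z * ∑ y, K z y := by simp [Finset.mul_sum]
        _ = 1 := by simp only [hK1, mul_one]; exact ih x
  have hpowle : ∀ t : ℕ, ∀ x y, (K ^ t) x y ≤ 1 := by
    intro t x y
    calc (K ^ t) x y ≤ ∑ y', (K ^ t) x y' :=
          Finset.single_le_sum (fun z _ => hpow0 t x z) (Finset.mem_univ y)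
      _ = 1 := hpow1 t x
  have hKT : ∀ t : ℕ, ∀ (u : X → ℝ) x, ((Kᵀ ^ t) *ᵥ u) x = ∑ y, (K ^ t) y x * u y := by
    intro t u x
    rw [← Matrix.transpose_pow, Matrix.mulVec]
    simp [dotProduct, Matrix.transpose_apply]
  -- bounds on the series
  have hgnn : ∀ t x, 0 ≤ γ ^ t * ((Kᵀ ^ t) *ᵥ ρ) x := by
    intro t x
    refine mul_nonneg (pow_nonneg hγ0 t) ?_
    rw [hKT]
    exact Finset.sum_nonneg fun y _ => mul_nonneg (hpow0 t y x) (hρpos y).le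
  have hgle : ∀ t x, γ ^ t * ((Kᵀ ^ t) *ᵥ ρ) x ≤ γ ^ t := by
    intro t x
    have : ((Kᵀ ^ t) *ᵥ ρ) x ≤ 1 := by
      rw [hKT]
      calc ∑ y, (K ^ t) y x * ρ y ≤ ∑ y, ρ y :=
            Finset.sum_le_sum fun y _ => by
              nlinarith [hpowle t y x, hpow0 t y x, (hρpos y).le]
        _ = 1 := hρ1
    nlinarith [pow_nonneg hγ0 t]
  have hfg : ∀ t x, |γ ^ t * ((Kᵀ ^ t) *ᵥ w) x| ≤ B * (γ ^ t * ((Kᵀ ^ t) *ᵥ ρ) x) := by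
    intro t x
    rw [abs_mul, abs_pow, abs_of_nonneg hγ0]
    rw [hKT, hKT]
    rw [mul_comm B _, mul_assoc]
    refine mul_le_mul_of_nonneg_left ?_ (pow_nonneg hγ0 t)
    calc |∑ y, (K ^ t) y x * w y| ≤ ∑ y, |(K ^ t) y x * w y| := Finset.abs_sum_le_sum_abs _ _
      _ ≤ ∑ y, (K ^ t) y x * ρ y * B := by
          refine Finset.sum_le_sum fun y _ => ?_
          rw [abs_mul, abs_of_nonneg (hpow0 t y x), hw]
          simp only [abs_mul, abs_of_nonneg (hρpos y).le]
          rw [← mul_assoc]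
          exact mul_le_mul_of_nonneg_left (hq y)
            (mul_nonneg (hpow0 t y x) (hρpos y).le)
      _ = (∑ y, (K ^ t) y x * ρ y) * B := by rw [Finset.sum_mul]
  have hsumg : ∀ x, Summable (fun t : ℕ => γ ^ t * ((Kᵀ ^ t) *ᵥ ρ) x) := by
    intro x
    exact Summable.of_nonneg_of_le (hgnn · x) (hgle · x) (summable_geometric_of_lt_one hγ0 hγ1)
  have hsumf : ∀ x, Summable (fun t : ℕ => γ ^ t * ((Kᵀ ^ t) *ᵥ w) x) := by
    intro x
    refine Summable.of_norm ?_
    exact Summable.of_nonneg_of_le (fun t => norm_nonneg _) (fun t => hfg t x)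
      ((hsumg x).mul_left B)
  set v : X → ℝ := fun x => ∑' t : ℕ, γ ^ t * ((Kᵀ ^ t) *ᵥ w) x with hv
  -- A *ᵥ v = w
  have hAv : A *ᵥ v = w := by
    have hexp : A *ᵥ v = v - γ • (Kᵀ *ᵥ v) := by
      rw [hA, Matrix.sub_mulVec, Matrix.one_mulVec, Matrix.smul_mulVec]
    funext x
    rw [hexp]
    have hrow : (v - γ • (Kᵀ *ᵥ v)) x = v x - γ * ∑ y, Kᵀ x y * v y := by
      simp [Matrix.mulVec, dotProduct]
    rw [hrow]
    have hswap : ∑ y, Kᵀ x y * v y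
        = ∑' t : ℕ, γ ^ t * ((Kᵀ ^ (t + 1)) *ᵥ w) x := by
      rw [hv]
      simp only [← tsum_mul_left]
      rw [← Summable.tsum_finsetSum (fun y _ => ((hsumf y).mul_left _))]
      congr 1; funext t
      have h1 : ((Kᵀ ^ (t + 1)) *ᵥ w) x = ∑ y, Kᵀ x y * ((Kᵀ ^ t) *ᵥ w) y := by
        rw [pow_succ', ← Matrix.mulVec_mulVec]
        simp [Matrix.mulVec, dotProduct]
      rw [h1, Finset.mul_sum]
      exact Finset.sum_congr rfl fun y _ => by ring
    rw [hswap]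
    have hshift : γ * ∑' t : ℕ, γ ^ t * ((Kᵀ ^ (t + 1)) *ᵥ w) x
        = ∑' t : ℕ, γ ^ (t + 1) * ((Kᵀ ^ (t + 1)) *ᵥ w) x := by
      rw [← tsum_mul_left]
      congr 1; funext t; ring
    rw [hshift]
    have h0 : v x = γ ^ 0 * ((Kᵀ ^ 0) *ᵥ w) x
        + ∑' t : ℕ, γ ^ (t + 1) * ((Kᵀ ^ (t + 1)) *ᵥ w) x := by
      rw [hv]
      exact Summable.tsum_eq_zero_add (hsumf x)
    simp only [pow_zero, pow_zero, Matrix.one_mulVec, one_mul] at h0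
    linarith [h0]
  -- A is invertible
  have hUnit : IsUnit A := by
    have hAT : Aᵀ = 1 - γ • K := by
      rw [hA, Matrix.transpose_sub, Matrix.transpose_one, Matrix.transpose_smul,
        Matrix.transpose_transpose]
    rw [← Matrix.isUnit_transpose, hAT, ← Matrix.mulVec_injective_iff_isUnit]
    have key : ∀ u : X → ℝ, ((1 : Matrix X X ℝ) - γ • K) *ᵥ u = 0 → u = 0 := by
      intro u hu
      by_contra hne
      obtain ⟨x0, -, hx0max⟩ := Finset.exists_max_image Finset.univ (fun y => |u y|)
        ⟨Classical.arbitrary X, Finset.mem_univ _⟩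
      have hpos : 0 < |u x0| := by
        rcases Function.ne_iff.1 hne with ⟨z, hz⟩
        have h1 : 0 < |u z| := abs_pos.2 hz
        linarith [hx0max z (Finset.mem_univ z)]
      rw [Matrix.sub_mulVec, Matrix.one_mulVec, Matrix.smul_mulVec] at hu
      have h := congrFun hu x0
      simp only [Pi.sub_apply, Pi.smul_apply, smul_eq_mul, Pi.zero_apply, sub_eq_zero] at h
      have heq : u x0 = γ * ∑ y, K x0 y * u y := by
        rw [h]
        congr 1
      have hS : |∑ y, K x0 y * u y| ≤ |u x0| :=
        calc |∑ y, K x0 y * u y| ≤ ∑ y, |K x0 y * u y| := Finset.abs_sum_le_sum_abs _ _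
          _ ≤ ∑ y, K x0 y * |u x0| := by
              refine Finset.sum_le_sum fun y _ => ?_
              rw [abs_mul, abs_of_nonneg (hK0 x0 y)]
              exact mul_le_mul_of_nonneg_left (hx0max y (Finset.mem_univ y)) (hK0 x0 y)
          _ = |u x0| := by rw [← Finset.sum_mul, hK1, one_mul]
      have hbound : |u x0| ≤ γ * |u x0| := by
        conv_lhs => rw [heq]
        rw [abs_mul, abs_of_nonneg hγ0]
        exact mul_le_mul_of_nonneg_left hS hγ0
      nlinarith
    intro u1 u2 h12
    have h12' : ((1 : Matrix X X ℝ) - γ • K) *ᵥ u1 = ((1 : Matrix X X ℝ) - γ • K) *ᵥ u2 := h12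
    have := key (u1 - u2) (by rw [Matrix.mulVec_sub, h12', sub_self])
    exact sub_eq_zero.1 this
  -- conclude A⁻¹ *ᵥ w = v
  have hinv : A⁻¹ *ᵥ w = v := by
    rw [← hAv, Matrix.mulVec_mulVec,
      Matrix.nonsing_inv_mul A ((Matrix.isUnit_iff_isUnit_det A).1 hUnit),
      Matrix.one_mulVec]
  intro x
  have hvb : |v x| ≤ κ * B * ρ x / (1 - γ) := by
    have hsa := (hsumf x).abs
    have h1a : ‖(∑' t : ℕ, γ ^ t * ((Kᵀ ^ t) *ᵥ w) x)‖
        ≤ ∑' t : ℕ, ‖γ ^ t * ((Kᵀ ^ t) *ᵥ w) x‖ := by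
      apply norm_tsum_le_tsum_norm
      simp only [Real.norm_eq_abs]
      exact hsa
    simp only [Real.norm_eq_abs] at h1a
    have h1 : |v x| ≤ ∑' t : ℕ, B * (γ ^ t * ((Kᵀ ^ t) *ᵥ ρ) x) :=
      le_trans h1a (Summable.tsum_le_tsum (fun t => hfg t x) hsa ((hsumg x).mul_left B))
    have h2 : ∑' t : ℕ, B * (γ ^ t * ((Kᵀ ^ t) *ᵥ ρ) x) = B * (d x / (1 - γ)) := by
      rw [tsum_mul_left, hd x, mul_div_cancel_left₀ _ (ne_of_gt h1γ)]
    have h3 : d x ≤ κ * ρ x := hcov x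
    have h4 : 0 ≤ d x := by
      rw [hd x]
      exact mul_nonneg h1γ.le (tsum_nonneg (hgnn · x))
    rw [h2] at h1
    calc |v x| ≤ B * (d x / (1 - γ)) := h1
      _ = B * d x / (1 - γ) := by ring
      _ ≤ κ * B * ρ x / (1 - γ) := by
          rw [div_le_div_iff₀ h1γ h1γ]
          have hh := mul_le_mul_of_nonneg_right (mul_le_mul_of_nonneg_left h3 hB) h1γ.le
          linarith [hh]
  rw [hinv, abs_div, abs_of_pos (hρpos x), div_le_div_iff₀ (hρpos x) h1γ]
  rw [le_div_iff₀ h1γ] at hvb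
  linarith
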